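/- Assume A is quadratik and faithful, and let Γ, Γ′ : G → Aut(B) be two group homomorphisms into the ℂ-algebra automorphisms of B, each making the upper-left corner embedding of A into B G-equivariant (i.e. for each of them there is a group homomorphism into the ℂ-algebra automorphisms of A, say α resp. α′, with Γ_g(L_a·E₁₁) = L_{α_g(a)}·E₁₁ and Γ′_g(L_a·E₁₁) = L_{α′_g(a)}·E₁₁ for all g, a). If Γ_g and Γ′_g agree on the first column of Mₙ(A) for every g ∈ G, then Γ = Γ′. In other words, such a G-action on B is uniquely determined by its restriction to the first column of Mₙ(A). -/

import Mathlib

/-- An algebra `A` is *quadratik* if every element of `A` is a finite sum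
`a₁b₁ + … + a_kb_k` of products of elements of `A`. -/
def IsQuadratik (A : Type*) [NonUnitalNonAssocSemiring A] : Prop :=
  ∀ x : A, ∃ l : List (A × A), x = (l.map fun p => p.1 * p.2).sum

/-- An algebra `A` is *faithful* if `a·b = 0` for all `b` implies `a = 0`. -/
def IsFaithful (A : Type*) [Mul A] [Zero A] : Prop :=
  ∀ a : A, (∀ b : A, a * b = 0) → a = 0

/-- Left multiplication `L_a : A → A`, `L_a(x) = a·x`, as a `ℂ`-linear
endomorphism of `A` (an element of `𝓛_A(A)`). -/
def Lmul {A : Type*} [NonUnitalRing A] [Module ℂ A] [SMulCommClass ℂ A A]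
    (a : A) : Module.End ℂ A where
  toFun x := a * x
  map_add' := mul_add a
  map_smul' c x := mul_smul_comm c a x

/-- Membership in `𝓛_A(A)`: a `ℂ`-linear endomorphism `T` of `A` belongs to
`𝓛_A(A)` iff it is right `A`-linear (`T(ab) = T(a)·b`) and adjointable (for all
`a` there is `d` with `a·T(x) = d·x` for all `x`). -/
def MemLA {A : Type*} [NonUnitalRing A] [Module ℂ A]
    (T : Module.End ℂ A) : Prop :=
  (∀ a b : A, T (a * b) = T a * b) ∧ ∀ a : A, ∃ d : A, ∀ x : A, a * T x = d * x

/-- A matrix over `𝓛_A(A)` (i.e. over `Module.End ℂ A`) belongs to the copy of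
`Mₙ(A)` iff all its entries are left multiplications `L_a` with `a ∈ A`. -/
def InMnA {A : Type*} [NonUnitalRing A] [Module ℂ A] [SMulCommClass ℂ A A]
    {n : ℕ} (X : Matrix (Fin n) (Fin n) (Module.End ℂ A)) : Prop :=
  ∀ i j, ∃ a : A, X i j = Lmul a

/-- The upper-left corner copy of `A` in `Mₙ(𝓛_A(A))`: `a ↦ L_a·E₁₁`. -/
def cornerA {A : Type*} [NonUnitalRing A] [Module ℂ A] [SMulCommClass ℂ A A]
    {n : ℕ} [NeZero n] (a : A) : Matrix (Fin n) (Fin n) (Module.End ℂ A) :=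
  Matrix.of fun i j => if i = 0 ∧ j = 0 then Lmul a else 0

/-- Identification of `Aⁿ` with the first column of `Mₙ(A)`: the vector `ξ`
corresponds to the matrix whose first column has entries `L_{ξᵢ}` and whose
other entries vanish. -/
def colMat {A : Type*} [NonUnitalRing A] [Module ℂ A] [SMulCommClass ℂ A A]
    {n : ℕ} [NeZero n] (ξ : Fin n → A) :
    Matrix (Fin n) (Fin n) (Module.End ℂ A) :=
  Matrix.of fun i j => if j = 0 then Lmul (ξ i) else 0

lemma Lmul_zero {A : Type*} [NonUnitalRing A] [Module ℂ A]
    [SMulCommClass ℂ A A] : Lmul (0 : A) = 0 := by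
  ext x
  exact zero_mul x

lemma cornerA_inMnA {A : Type*} [NonUnitalRing A] [Module ℂ A]
    [SMulCommClass ℂ A A] {n : ℕ} [NeZero n] (a : A) :
    InMnA (cornerA (n := n) a) := by
  intro i j
  by_cases h : i = 0 ∧ j = 0
  · exact ⟨a, by simp [cornerA, h]⟩
  · exact ⟨0, by simp [cornerA, h, Lmul_zero]⟩

lemma colMat_inMnA {A : Type*} [NonUnitalRing A] [Module ℂ A]
    [SMulCommClass ℂ A A] {n : ℕ} [NeZero n] (ξ : Fin n → A) :
    InMnA (colMat ξ) := by
  intro i j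
  by_cases h : j = 0
  · exact ⟨ξ i, by simp [colMat, h]⟩
  · exact ⟨0, by simp [colMat, h, Lmul_zero]⟩


section Aux13
variable {A : Type*} [NonUnitalRing A] [Module ℂ A] [SMulCommClass ℂ A A]

lemma Lmul_apply' (a x : A) : Lmul a x = a * x := rfl

lemma Lmul_add' (a b : A) : Lmul (a + b) = Lmul a + Lmul b := by
  ext x; simp [Lmul_apply', add_mul]

/-- `Lmul` as an additive monoid hom. -/
def LmulHom : A →+ Module.End ℂ A where
  toFun := Lmul
  map_zero' := Lmul_zero
  map_add' := Lmul_add'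

lemma comp_Lmul (T : Module.End ℂ A) (hT : ∀ a b : A, T (a * b) = T a * b)
    (a : A) : T * Lmul a = Lmul (T a) := by
  ext x; exact hT a x

variable {n : ℕ} [NeZero n]

/-- `colMat` as an additive monoid hom. -/
def colMatHom : (Fin n → A) →+ Matrix (Fin n) (Fin n) (Module.End ℂ A) where
  toFun := colMat
  map_zero' := by
    ext i j; by_cases h : j = 0 <;> simp [colMat, h, Lmul_zero]
  map_add' ξ η := by
    ext i j; by_cases h : j = 0 <;> simp [colMat, h, Lmul_add']

lemma colMat_add (ξ η : Fin n → A) :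
    colMat (ξ + η) = colMat ξ + colMat η :=
  map_add (colMatHom (A := A) (n := n)) ξ η

lemma colMat_zero : colMat (0 : Fin n → A) = 0 :=
  map_zero (colMatHom (A := A) (n := n))

lemma mul_colMat (X : Matrix (Fin n) (Fin n) (Module.End ℂ A))
    (hX : ∀ i j, ∀ a b : A, X i j (a * b) = X i j a * b) (ζ : Fin n → A) :
    X * colMat ζ = colMat fun i => ∑ k, X i k (ζ k) := by
  refine Matrix.ext fun i j => ?_
  by_cases h : j = 0
  · simp only [Matrix.mul_apply, colMat, Matrix.of_apply, h, if_true]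
    calc ∑ k, X i k * Lmul (ζ k) = ∑ k, Lmul (X i k (ζ k)) :=
          Finset.sum_congr rfl fun k _ => comp_Lmul _ (hX i k) _
      _ = Lmul (∑ k, X i k (ζ k)) := (map_sum (LmulHom (A := A)) _ _).symm
  · simp [Matrix.mul_apply, colMat, h]

lemma cornerA_eq_colMat (a : A) :
    cornerA (n := n) a = colMat (Pi.single 0 a) := by
  ext i j
  by_cases hi : i = 0 <;> by_cases hj : j = 0 <;>
    simp [cornerA, colMat, hi, hj, Pi.single_apply, Lmul_zero]

lemma mul_cornerA (X : Matrix (Fin n) (Fin n) (Module.End ℂ A))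
    (hX : ∀ i j, ∀ a b : A, X i j (a * b) = X i j a * b) (c : A) :
    X * cornerA c = colMat fun i => X i 0 c := by
  rw [cornerA_eq_colMat, mul_colMat X hX]
  refine congrArg colMat (funext fun i => ?_)
  have h : ∀ k : Fin n, X i k ((Pi.single (0 : Fin n) c : Fin n → A) k)
      = if k = 0 then X i 0 c else 0 := by
    intro k
    rcases eq_or_ne k 0 with rfl | hk
    · rw [if_pos rfl, Pi.single_eq_same]
    · rw [if_neg hk, Pi.single_eq_of_ne hk, map_zero]
  rw [Finset.sum_congr rfl fun k _ => h k]
  simp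

lemma colMat_entries (ξ : Fin n → A) :
    ∀ i j, ∀ a b : A, (colMat ξ) i j (a * b) = (colMat ξ) i j a * b := by
  intro i j a b
  by_cases h : j = 0 <;> simp [colMat, h, Lmul_apply', mul_assoc]

lemma colMat_single_mul_corner (i : Fin n) (a b : A) :
    colMat (Pi.single i a) * cornerA b = colMat (Pi.single i (a * b)) := by
  rw [mul_cornerA _ (colMat_entries _)]
  refine congrArg colMat (funext fun i' => ?_)
  rcases eq_or_ne i' i with rfl | h
  · simp [colMat, Pi.single_apply, Lmul_apply']
  · simp [colMat, Pi.single_apply, h, Lmul_apply', Lmul_zero]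

lemma sum_single_apply (X : Matrix (Fin n) (Fin n) (Module.End ℂ A))
    (i k : Fin n) (a : A) :
    ∑ k', X i k' ((Pi.single k a : Fin n → A) k') = X i k a := by
  rw [Finset.sum_eq_single k]
  · rw [Pi.single_eq_same]
  · intro b _ hb; rw [Pi.single_eq_of_ne hb, map_zero]
  · intro h; exact absurd (Finset.mem_univ k) h

end Aux13

set_option maxHeartbeats 1000000 in
set_option synthInstance.maxHeartbeats 400000 in
/-- If `A` is quadratik and faithful and `Γ, Γ′ : G → Aut(B)` are two group
homomorphisms into the `ℂ`-algebra automorphisms of `B`, each making the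
upper-left corner embedding of `A` into `B` `G`-equivariant, and if `Γ_g` and
`Γ′_g` agree on the first column of `Mₙ(A)` for every `g`, then `Γ = Γ′`. -/
theorem stmt13 (A : Type*) [NonUnitalRing A] [Module ℂ A]
    [SMulCommClass ℂ A A] [IsScalarTower ℂ A A]
    (hquad : IsQuadratik A) (hfaith : IsFaithful A)
    (n : ℕ) [NeZero n]
    (G : Type*) [Group G]
    (B : NonUnitalSubalgebra ℂ (Matrix (Fin n) (Fin n) (Module.End ℂ A)))
    (hB : ∀ x : B, ∀ i j,
      MemLA ((x : Matrix (Fin n) (Fin n) (Module.End ℂ A)) i j))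
    (hMnA : ∀ X : Matrix (Fin n) (Fin n) (Module.End ℂ A), InMnA X → X ∈ B)
    (Γ Γ' : G →* RingAut B)
    (hΓlin : ∀ (g : G) (c : ℂ) (x : B), Γ g (c • x) = c • Γ g x)
    (hΓ'lin : ∀ (g : G) (c : ℂ) (x : B), Γ' g (c • x) = c • Γ' g x)
    (α α' : G →* RingAut A)
    (hαlin : ∀ (g : G) (c : ℂ) (a : A), α g (c • a) = c • α g a)
    (hα'lin : ∀ (g : G) (c : ℂ) (a : A), α' g (c • a) = c • α' g a)
    (hequiv : ∀ (g : G) (a : A),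
      ((Γ g ⟨cornerA a, hMnA _ (cornerA_inMnA a)⟩ : B) :
          Matrix (Fin n) (Fin n) (Module.End ℂ A)) = cornerA (α g a))
    (hequiv' : ∀ (g : G) (a : A),
      ((Γ' g ⟨cornerA a, hMnA _ (cornerA_inMnA a)⟩ : B) :
          Matrix (Fin n) (Fin n) (Module.End ℂ A)) = cornerA (α' g a))
    (hagree : ∀ (g : G) (ξ : Fin n → A),
      Γ g ⟨colMat ξ, hMnA _ (colMat_inMnA ξ)⟩ =
        Γ' g ⟨colMat ξ, hMnA _ (colMat_inMnA ξ)⟩) :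
    Γ = Γ' := by
  classical
  have colB_mem : ∀ ξ : Fin n → A, colMat ξ ∈ B := fun ξ => hMnA _ (colMat_inMnA ξ)
  set M := Matrix (Fin n) (Fin n) (Module.End ℂ A) with hM
  let colB : (Fin n → A) → B := fun ξ => ⟨colMat ξ, colB_mem ξ⟩
  let cb : A → B := fun c => ⟨cornerA c, hMnA _ (cornerA_inMnA c)⟩
  have hentries : ∀ (x : B) (i j : Fin n) (a b : A),
      ((x : M) i j) (a * b) = ((x : M) i j) a * b := fun x i j => (hB x i j).1
  have hcolB_add : ∀ ξ η, colB ξ + colB η = colB (ξ + η) := by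
    intro ξ η; apply Subtype.ext
    show colMat ξ + colMat η = colMat (ξ + η)
    exact (colMat_add ξ η).symm
  have hcolB_zero : colB 0 = 0 := by
    apply Subtype.ext
    show colMat (0 : Fin n → A) = 0
    exact colMat_zero
  have hmul_cb : ∀ (x : B) (c : A), x * cb c = colB fun i => ((x : M) i 0) c := by
    intro x c; apply Subtype.ext
    show (x : M) * cornerA c = colMat _
    exact mul_cornerA _ (hentries x) c
  have step1 : ∀ (Δ : G →* RingAut B) (β : G →* RingAut A),
      (∀ (g : G) (c : A), Δ g (cb c) = cb (β g c)) →
      ∀ (g : G) (ξ : Fin n → A), ∃ ζ, Δ g (colB ξ) = colB ζ := by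
    intro Δ β hΔ g ξ
    set P : B → Prop := fun y => ∃ ζ', Δ g y = colB ζ' with hP
    have hP0 : P 0 := ⟨0, by rw [map_zero, hcolB_zero]⟩
    have hPadd : ∀ y z, P y → P z → P (y + z) := by
      rintro y z ⟨ζ₁, h₁⟩ ⟨ζ₂, h₂⟩
      exact ⟨ζ₁ + ζ₂, by rw [map_add, h₁, h₂, hcolB_add]⟩
    have hPmul : ∀ (z : B) (c : A), P (z * cb c) := by
      intro z c
      exact ⟨_, by rw [map_mul, hΔ g c, hmul_cb]⟩
    have hPsingle : ∀ (i : Fin n) (a : A), P (colB (Pi.single i a)) := by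
      intro i a
      obtain ⟨l, hl⟩ := hquad a
      rw [hl]; clear hl
      induction l with
      | nil =>
        have h0 : colB (Pi.single i ((List.map (fun p => p.1 * p.2) ([] : List (A × A))).sum)) = 0 := by
          simp only [List.map_nil, List.sum_nil, Pi.single_zero]
          exact hcolB_zero
        rw [h0]; exact hP0
      | cons p l ih =>
        have hsplit :
            colB (Pi.single i ((List.map (fun p => p.1 * p.2) (p :: l)).sum))
              = colB (Pi.single i p.1) * cb p.2
                + colB (Pi.single i ((List.map (fun p => p.1 * p.2) l).sum)) := by
          apply Subtype.ext
          show colMat _ = colMat (Pi.single i p.1) * cornerA p.2 + colMat _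
          simp only [List.map_cons, List.sum_cons]
          rw [colMat_single_mul_corner, ← colMat_add, ← Pi.single_add]
        rw [hsplit]
        exact hPadd _ _ (hPmul _ _) ih
    have hPsum : ∀ (s : Finset (Fin n)) (f : Fin n → B),
        (∀ i, P (f i)) → P (∑ i ∈ s, f i) := by
      intro s f hf
      induction s using Finset.induction with
      | empty => simpa using hP0
      | insert _ _ hns ih =>
        rw [Finset.sum_insert hns]
        exact hPadd _ _ (hf _) ih
    have hdecomp : colB ξ = ∑ i, colB (Pi.single i (ξ i)) := by
      apply Subtype.ext
      rw [AddSubmonoidClass.coe_finset_sum]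
      show colMat ξ = _
      calc colMat ξ = colMat (∑ i, Pi.single i (ξ i)) := by
            rw [Finset.univ_sum_single]
        _ = ∑ i, colMat (Pi.single i (ξ i)) :=
            map_sum (colMatHom (A := A) (n := n)) _ _
    rw [hdecomp]
    exact hPsum _ _ fun i => hPsingle i (ξ i)
  have hΓcb : ∀ (g : G) (c : A), Γ g (cb c) = cb (α g c) :=
    fun g c => Subtype.ext (hequiv g c)
  have hΓ'cb : ∀ (g : G) (c : A), Γ' g (cb c) = cb (α' g c) :=
    fun g c => Subtype.ext (hequiv' g c)
  have hagreeB : ∀ (g : G) (ξ : Fin n → A), Γ g (colB ξ) = Γ' g (colB ξ) :=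
    fun g ξ => hagree g ξ
  refine MonoidHom.ext fun g => RingEquiv.ext fun x => ?_
  have key : ∀ η : Fin n → A, Γ g x * colB η = Γ' g x * colB η := by
    intro η
    obtain ⟨ζ, hC⟩ := step1 Γ α hΓcb g⁻¹ η
    set C : B := Γ g⁻¹ (colB η) with hCdef
    have hgC : Γ g C = colB η := by
      rw [hCdef]
      have h1 : Γ g (Γ g⁻¹ (colB η)) = (Γ g * Γ g⁻¹) (colB η) := rfl
      rw [h1, ← map_mul, mul_inv_cancel, map_one]
      rfl
    have hg'C : Γ' g C = colB η := by
      rw [hC, ← hagreeB g ζ, ← hC]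
      exact hgC
    have hxC : x * C = colB fun i => ∑ k, ((x : M) i k) (ζ k) := by
      rw [hC]
      apply Subtype.ext
      show (x : M) * colMat ζ = colMat _
      exact mul_colMat _ (hentries x) ζ
    calc Γ g x * colB η = Γ g x * Γ g C := by rw [hgC]
      _ = Γ g (x * C) := (map_mul (Γ g) x C).symm
      _ = Γ g (colB _) := by rw [hxC]
      _ = Γ' g (colB _) := hagreeB g _
      _ = Γ' g (x * C) := by rw [← hxC]
      _ = Γ' g x * Γ' g C := map_mul (Γ' g) x C
      _ = Γ' g x * colB η := by rw [hg'C]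
  have hMeq : ∀ η : Fin n → A,
      ((Γ g x : B) : M) * colMat η = ((Γ' g x : B) : M) * colMat η := by
    intro η
    have h := congrArg (fun z : B => (z : M)) (key η)
    exact h
  apply Subtype.ext
  refine Matrix.ext fun i k => ?_
  refine LinearMap.ext fun a => ?_
  have h1 := hMeq (Pi.single k a)
  rw [mul_colMat _ (hentries (Γ g x)), mul_colMat _ (hentries (Γ' g x))] at h1
  have h2 := congrFun (congrFun h1 i) (0 : Fin n)
  simp only [colMat, Matrix.of_apply, if_pos rfl] at h2
  rw [sum_single_apply, sum_single_apply] at h2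
  have h3 : ∀ b : A, (((Γ g x : B) : M) i k) a * b = (((Γ' g x : B) : M) i k) a * b :=
    fun b => LinearMap.congr_fun h2 b
  have h4 : (((Γ g x : B) : M) i k) a - (((Γ' g x : B) : M) i k) a = 0 := by
    refine hfaith _ fun b => ?_
    rw [sub_mul, h3 b, sub_self]
  exact sub_eq_zero.mp h4
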